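/- The function q(t) = A·sinh(μ(1 + 3εA²/(8μ²))t) - (εA³/(32μ²))·sinh(3μt) satisfies the residual identity: q''(t) - μ²q(t) + εq(t)³ = O(ε²) uniformly on compact t-intervals as ε → 0; precisely, there is a function R(t,ε), polynomial in ε with coefficients built from sinh and cosh of multiples of μt (bounded on compacts), such that q'' - μ²q + εq³ = ε²·R(t,ε). -/

import Mathlib

lemma sinh_lip (M x y : ℝ) (hx : |x| ≤ M) (hy : |y| ≤ M) :
    |Real.sinh x - Real.sinh y| ≤ Real.cosh M * |x - y| := by
  have h := Convex.norm_image_sub_le_of_norm_hasDerivWithin_le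
    (f := Real.sinh) (f' := Real.cosh) (s := Set.Icc (-M) M) (C := Real.cosh M)
    (fun z _ => (Real.hasDerivAt_sinh z).hasDerivWithinAt)
    (fun z hz => by
      rw [Real.norm_eq_abs, abs_of_pos (Real.cosh_pos z)]
      exact Real.cosh_le_cosh.2 (by
        rw [abs_of_nonneg (le_trans (abs_nonneg x) hx)]
        exact abs_le.2 ⟨hz.1, hz.2⟩))
    (convex_Icc _ _) (abs_le.1 hy) (abs_le.1 hx)
  simpa [Real.norm_eq_abs] using h

lemma deriv2 (a b c d : ℝ) :
    deriv (deriv (fun t => a * Real.sinh (c*t) - b * Real.sinh (d*t)))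
    = fun t => a*c^2*Real.sinh (c*t) - b*d^2*Real.sinh (d*t) := by
  have hc : ∀ x : ℝ, HasDerivAt (fun t : ℝ => c*t) c x := fun x => by
    simpa using (hasDerivAt_id x).const_mul c
  have hd : ∀ x : ℝ, HasDerivAt (fun t : ℝ => d*t) d x := fun x => by
    simpa using (hasDerivAt_id x).const_mul d
  have e1 : deriv (fun t => a * Real.sinh (c*t) - b * Real.sinh (d*t))
      = fun x => a*c*Real.cosh (c*x) - b*d*Real.cosh (d*x) := by
    funext x
    have h := (((hc x).sinh.const_mul a).sub ((hd x).sinh.const_mul b))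
    have h2 : HasDerivAt (fun t => a * Real.sinh (c*t) - b * Real.sinh (d*t))
        (a*c*Real.cosh (c*x) - b*d*Real.cosh (d*x)) x := by
      exact h.congr_deriv (by ring)
    exact h2.deriv
  rw [e1]
  funext x
  have h := (((hc x).cosh.const_mul (a*c)).sub ((hd x).cosh.const_mul (b*d)))
  have h2 : HasDerivAt (fun x => a*c*Real.cosh (c*x) - b*d*Real.cosh (d*x))
      (a*c^2*Real.sinh (c*x) - b*d^2*Real.sinh (d*x)) x := by
    exact h.congr_deriv (by ring)
  exact h2.deriv

set_option maxHeartbeats 2000000 in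
theorem two_mode_residual (μ A : ℝ) (hμ : 0 < μ)
    (q : ℝ → ℝ → ℝ)
    (hq : ∀ ε t, q ε t = A * Real.sinh (μ * (1 + 3 * ε * A^2 / (8 * μ^2)) * t)
        - (ε * A^3 / (32 * μ^2)) * Real.sinh (3 * μ * t)) :
    ∃ R : ℝ → ℝ → ℝ,
      (∀ ε t, 0 < ε →
        deriv (deriv (q ε)) t - μ^2 * q ε t + ε * (q ε t)^3 = ε^2 * R ε t) ∧
      (∀ K : ℝ, 0 < K → ∃ C : ℝ, ∀ ε t, 0 < ε → ε ≤ 1 → |t| ≤ K →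
        |R ε t| ≤ C) := by
  refine ⟨fun ε t => (deriv (deriv (q ε)) t - μ^2 * q ε t + ε * (q ε t)^3)/ε^2,
    fun ε t hε => by
      symm; rw [mul_comm]; exact div_mul_cancel₀ _ (pow_ne_zero 2 hε.ne'), ?_⟩
  intro K hK
  set M := (3*μ + 3*A^2/μ) * K with hM
  set Ch := Real.cosh M with hCh
  refine ⟨(9*|A|^5/(64*μ^2))*Ch + (3*|A|^5/(32*μ^2))*(Ch^2*Ch)
    + (3*|A|^7/(1024*μ^4))*(Ch*Ch^2) + (|A|^9/(32768*μ^6))*(Ch^2*Ch)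
    + |A|^3*(Ch*(9*A^2/(8*μ)*K))/4, ?_⟩
  intro ε t hε hε1 ht
  have hqf : q ε = fun t => A * Real.sinh (μ * (1 + 3*ε*A^2/(8*μ^2)) * t)
      - (ε*A^3/(32*μ^2)) * Real.sinh (3*μ*t) := funext (hq ε)
  simp only [hqf, deriv2]
  set c := μ * (1 + 3*ε*A^2/(8*μ^2)) with hcdef
  set s1 := Real.sinh (c*t) with hs1def
  set s3 := Real.sinh (3*μ*t) with hs3def
  -- basic bounds
  have hA2 : (0:ℝ) ≤ A^2 := sq_nonneg A
  have hcpos : 0 < c := by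
    rw [hcdef]; positivity
  have hcle : c ≤ μ + 3*A^2/(8*μ) := by
    rw [hcdef, mul_add, mul_one]
    have he : μ * (3*ε*A^2/(8*μ^2)) = ε * (3*A^2/(8*μ)) := by
      field_simp
    rw [he]
    have : ε * (3*A^2/(8*μ)) ≤ 1 * (3*A^2/(8*μ)) := by
      apply mul_le_mul_of_nonneg_right hε1 (by positivity)
    linarith
  have hct : |c*t| ≤ M := by
    rw [abs_mul, abs_of_pos hcpos, hM]
    have h1 : c * |t| ≤ (μ + 3*A^2/(8*μ)) * K := by
      apply mul_le_mul hcle ht (abs_nonneg t) (by positivity)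
    refine h1.trans ?_
    apply mul_le_mul_of_nonneg_right _ hK.le
    have h8 : 3*A^2/(8*μ) ≤ 3*A^2/μ := by
      apply div_le_div_of_nonneg_left (by positivity) hμ
      linarith
    linarith
  have h3ct : |3*(c*t)| ≤ M := by
    rw [abs_mul, hM]
    have : |(3:ℝ)| = 3 := by norm_num
    rw [this, abs_mul, abs_of_pos hcpos]
    have h1 : 3 * (c * |t|) ≤ 3 * ((μ + 3*A^2/(8*μ)) * K) := by
      have := mul_le_mul hcle ht (abs_nonneg t) (by positivity : (0:ℝ) ≤ μ + 3*A^2/(8*μ))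
      linarith
    refine h1.trans ?_
    have : 3 * ((μ + 3*A^2/(8*μ)) * K) = (3*μ + 9*A^2/(8*μ)) * K := by ring
    rw [this]
    apply mul_le_mul_of_nonneg_right _ hK.le
    have h8 : 9*A^2/(8*μ) ≤ 3*A^2/μ := by
      rw [div_le_div_iff₀ (by positivity) hμ]
      nlinarith
    linarith
  have h3mt : |3*μ*t| ≤ M := by
    rw [abs_mul, abs_mul, hM]
    have h3 : |(3:ℝ)| = 3 := by norm_num
    rw [h3, abs_of_pos hμ]
    have : 3 * μ * |t| ≤ 3 * μ * K := by gcongr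
    refine this.trans ?_
    apply mul_le_mul_of_nonneg_right _ hK.le
    have : 0 ≤ 3*A^2/μ := by positivity
    linarith
  have hCh1 : (1:ℝ) ≤ Ch := Real.one_le_cosh M
  have hChpos : (0:ℝ) < Ch := lt_of_lt_of_le one_pos hCh1
  have hs1b : |s1| ≤ Ch := by
    rw [hs1def, Real.abs_sinh, hCh]
    exact le_trans (Real.sinh_le_sinh.2 hct) (Real.sinh_lt_cosh M).le
  have hs3b : |s3| ≤ Ch := by
    rw [hs3def, Real.abs_sinh, hCh]
    exact le_trans (Real.sinh_le_sinh.2 h3mt) (Real.sinh_lt_cosh M).le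
  -- key identity
  set E := (9*A^5/(64*μ^2))*s1 - (3*A^5/(32*μ^2))*s1^2*s3
      + ε*(3*A^7/(1024*μ^4))*s1*s3^2 - ε^2*(A^9/(32768*μ^6))*s3^3 with hE
  set D := Real.sinh (3*(c*t)) - s3 with hD
  have hX : A*c^2*s1 - (ε*A^3/(32*μ^2))*(3*μ)^2*s3 - μ^2*(A*s1 - (ε*A^3/(32*μ^2))*s3)
      + ε*(A*s1 - (ε*A^3/(32*μ^2))*s3)^3 = ε^2 * E + (ε*A^3/4) * D := by
    rw [hD, Real.sinh_three_mul, ← hs1def, hE]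
    clear_value s1 s3
    rw [hcdef]
    field_simp
    ring
  rw [hX]
  have hdiv : (ε^2 * E + (ε*A^3/4) * D)/ε^2 = E + (A^3/(4*ε))*D := by
    field_simp
  rw [hdiv]
  -- bound D
  have hDb : |D| ≤ Ch * (ε * (9*A^2/(8*μ)*K)) := by
    rw [hD, hs3def]
    have hl := sinh_lip M (3*(c*t)) (3*μ*t) h3ct h3mt
    refine hl.trans ?_
    rw [hCh]
    apply mul_le_mul_of_nonneg_left _ (Real.cosh_pos M).le
    have heq : 3*(c*t) - 3*μ*t = (9*ε*A^2/(8*μ))*t := by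
      rw [hcdef]; field_simp; ring
    rw [heq, abs_mul, abs_of_nonneg (by positivity : (0:ℝ) ≤ 9*ε*A^2/(8*μ))]
    have : 9*ε*A^2/(8*μ) * |t| ≤ 9*ε*A^2/(8*μ) * K := by gcongr
    refine this.trans ?_
    apply le_of_eq; ring
  -- assemble
  have tri : |E + (A^3/(4*ε))*D| ≤ |E| + |A^3/(4*ε)| * |D| := by
    refine (abs_add_le _ _).trans ?_
    rw [abs_mul]
  have hterm2 : |A^3/(4*ε)| * |D| ≤ |A|^3*(Ch*(9*A^2/(8*μ)*K))/4 := by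
    have he : |A^3/(4*ε)| = |A|^3/(4*ε) := by
      rw [abs_div, abs_pow, abs_of_pos (by positivity : (0:ℝ) < 4*ε)]
    rw [he]
    have h1 : |A|^3/(4*ε) * |D| ≤ |A|^3/(4*ε) * (Ch * (ε * (9*A^2/(8*μ)*K))) := by
      gcongr
    refine h1.trans (le_of_eq ?_)
    field_simp
  have hEb : |E| ≤ (9*|A|^5/(64*μ^2))*Ch + (3*|A|^5/(32*μ^2))*(Ch^2*Ch)
      + (3*|A|^7/(1024*μ^4))*(Ch*Ch^2) + (|A|^9/(32768*μ^6))*(Ch^2*Ch) := by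
    rw [hE]
    have t1 : |(9*A^5/(64*μ^2))*s1| ≤ (9*|A|^5/(64*μ^2))*Ch := by
      rw [abs_mul, abs_div, abs_mul, abs_pow,
        abs_of_pos (by positivity : (0:ℝ) < 64*μ^2),
        (by norm_num : |(9:ℝ)| = 9)]
      gcongr
    have t2 : |(3*A^5/(32*μ^2))*s1^2*s3| ≤ (3*|A|^5/(32*μ^2))*(Ch^2*Ch) := by
      rw [abs_mul, abs_mul, abs_pow, abs_div, abs_mul, abs_pow,
        abs_of_pos (by positivity : (0:ℝ) < 32*μ^2),
        (by norm_num : |(3:ℝ)| = 3), mul_assoc]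
      gcongr
    have t3 : |ε*(3*A^7/(1024*μ^4))*s1*s3^2| ≤ (3*|A|^7/(1024*μ^4))*(Ch*Ch^2) := by
      rw [abs_mul, abs_mul, abs_mul, abs_pow, abs_div, abs_mul, abs_pow,
        abs_of_pos (by positivity : (0:ℝ) < 1024*μ^4),
        (by norm_num : |(3:ℝ)| = 3), abs_of_pos hε]
      calc ε * (3*|A|^7/(1024*μ^4)) * |s1| * |s3|^2
          ≤ 1 * (3*|A|^7/(1024*μ^4)) * Ch * Ch^2 := by gcongr
        _ = (3*|A|^7/(1024*μ^4))*(Ch*Ch^2) := by ring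
    have t4 : |ε^2*(A^9/(32768*μ^6))*s3^3| ≤ (|A|^9/(32768*μ^6))*(Ch^2*Ch) := by
      rw [abs_mul, abs_mul, abs_pow, abs_pow, abs_div, abs_pow,
        abs_of_pos (by positivity : (0:ℝ) < 32768*μ^6), abs_of_pos hε]
      calc ε^2 * (|A|^9/(32768*μ^6)) * |s3|^3
          ≤ 1^2 * (|A|^9/(32768*μ^6)) * Ch^3 := by gcongr
        _ = (|A|^9/(32768*μ^6))*(Ch^2*Ch) := by ring
    calc |(9*A^5/(64*μ^2))*s1 - (3*A^5/(32*μ^2))*s1^2*s3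
        + ε*(3*A^7/(1024*μ^4))*s1*s3^2 - ε^2*(A^9/(32768*μ^6))*s3^3|
        ≤ |(9*A^5/(64*μ^2))*s1 - (3*A^5/(32*μ^2))*s1^2*s3
          + ε*(3*A^7/(1024*μ^4))*s1*s3^2| + |ε^2*(A^9/(32768*μ^6))*s3^3| :=
            abs_sub _ _
      _ ≤ |(9*A^5/(64*μ^2))*s1 - (3*A^5/(32*μ^2))*s1^2*s3|
          + |ε*(3*A^7/(1024*μ^4))*s1*s3^2| + |ε^2*(A^9/(32768*μ^6))*s3^3| := by
            gcongr; exact abs_add_le _ _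
      _ ≤ |(9*A^5/(64*μ^2))*s1| + |(3*A^5/(32*μ^2))*s1^2*s3|
          + |ε*(3*A^7/(1024*μ^4))*s1*s3^2| + |ε^2*(A^9/(32768*μ^6))*s3^3| := by
            gcongr; exact abs_sub _ _
      _ ≤ _ := by linarith
  calc |E + (A^3/(4*ε))*D| ≤ |E| + |A^3/(4*ε)| * |D| := tri
    _ ≤ _ := by linarith
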